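/- On the Lorentzian cylinder C = ℝ × AddCircle(2π), for every point r = (t, θ) the past null cone of r coincides with the future null cone of the antipodally shifted point c = (t − π, θ + π): frontier Ĵ⁺((t − π, θ + π)) = frontier Ĵ⁻((t, θ)), where π denotes the image of π ∈ ℝ in AddCircle(2π). -/

import Mathlib

/-- The spatial circle `ℝ/2πℤ` of circumference `2π`, with its quotient norm. -/
abbrev Circ : Type := AddCircle (2 * Real.pi)

/-- The causal relation on the Lorentzian cylinder `C = ℝ × Circ`:
`(s, φ) ≼ (t, θ)` iff `‖θ - φ‖ ≤ t - s` (the first coordinate is time). -/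
def caus (p q : ℝ × Circ) : Prop := ‖q.2 - p.2‖ ≤ q.1 - p.1

/-- The causal future `Ĵ⁺(p)` of a point of the Lorentzian cylinder. -/
def Jp (p : ℝ × Circ) : Set (ℝ × Circ) := {q | caus p q}

/-- The causal past `Ĵ⁻(p)` of a point of the Lorentzian cylinder. -/
def Jm (p : ℝ × Circ) : Set (ℝ × Circ) := {q | caus q p}

open Real Set

lemma two_pi_pos' : (0:ℝ) < 2 * Real.pi := by positivity

lemma circ_norm_of_mem {y : ℝ} (hy : |y| ≤ Real.pi) : ‖(y : Circ)‖ = |y| := by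
  rw [AddCircle.norm_coe_eq_abs_iff _ (ne_of_gt two_pi_pos')]
  rw [abs_of_pos two_pi_pos']
  linarith

lemma circ_norm_add_pi (x : Circ) : ‖x + ((Real.pi : ℝ) : Circ)‖ = Real.pi - ‖x‖ := by
  obtain ⟨y, hy, rfl⟩ : ∃ y : ℝ, y ∈ Set.Ioc (-Real.pi) Real.pi ∧ (y : Circ) = x := by
    induction x using QuotientAddGroup.induction_on with
    | H b =>
      refine ⟨toIocMod two_pi_pos' (-Real.pi) b, ?_, ?_⟩
      · have := toIocMod_mem_Ioc two_pi_pos' (-Real.pi) b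
        convert this using 3
        · rfl
        · ring
      · symm
        rw [QuotientAddGroup.eq_iff_sub_mem]
        rw [self_sub_toIocMod two_pi_pos' (-Real.pi) b]
        exact AddSubgroup.zsmul_mem_zmultiples _ _
  have hcoe : ((y : ℝ) : Circ) + ((Real.pi : ℝ) : Circ) = ((y + Real.pi : ℝ) : Circ) :=
    (AddCircle.coe_add (2 * Real.pi) y Real.pi).symm
  rw [hcoe]
  have hy1 := hy.1
  have hy2 := hy.2
  rcases le_or_gt y 0 with h | h
  · rw [circ_norm_of_mem (y := y + Real.pi) (by rw [abs_of_nonneg (by linarith)]; linarith),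
      circ_norm_of_mem (y := y) (by rw [abs_of_nonpos h]; linarith)]
    rw [abs_of_nonneg (by linarith : (0:ℝ) ≤ y + Real.pi), abs_of_nonpos h]; ring
  · have heq : ((y + Real.pi : ℝ) : Circ) = ((y - Real.pi : ℝ) : Circ) := by
      have h2 := AddCircle.coe_add_period (2 * Real.pi) (y - Real.pi)
      rw [← h2]; congr 1; ring
    rw [heq, circ_norm_of_mem (y := y - Real.pi) (by rw [abs_of_nonpos (by linarith)]; linarith),
      circ_norm_of_mem (y := y) (by rw [abs_of_pos h]; exact hy2)]
    rw [abs_of_nonpos (by linarith : y - Real.pi ≤ 0), abs_of_pos h]; ring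

lemma frontier_cone (h : Circ → ℝ) (hh : Continuous h) (s a : ℝ) (hs : s = 1 ∨ s = -1) :
    frontier {q : ℝ × Circ | h q.2 ≤ s * q.1 + a} = {q : ℝ × Circ | h q.2 = s * q.1 + a} := by
  have hs2 : s * s = 1 := by rcases hs with rfl | rfl <;> norm_num
  have hcont : Continuous fun q : ℝ × Circ => s * q.1 + a - h q.2 :=
    ((continuous_const.mul continuous_fst).add continuous_const).sub (hh.comp continuous_snd)
  have hclosed : IsClosed {q : ℝ × Circ | h q.2 ≤ s * q.1 + a} :=
    isClosed_le (f := fun q : ℝ × Circ => h q.2) (g := fun q : ℝ × Circ => s * q.1 + a)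
      (by fun_prop) (by fun_prop)
  have hint : interior {q : ℝ × Circ | h q.2 ≤ s * q.1 + a}
      = {q : ℝ × Circ | h q.2 < s * q.1 + a} := by
    apply Subset.antisymm
    · intro q hq
      have hqS : q ∈ {q : ℝ × Circ | h q.2 ≤ s * q.1 + a} := interior_subset hq
      simp only [mem_setOf_eq] at hqS ⊢
      by_contra hlt
      push_neg at hlt
      have heq : h q.2 = s * q.1 + a := le_antisymm hqS hlt
      -- approach along decreasing time
      have hf : Continuous fun ε : ℝ => ((q.1 - s * ε, q.2) : ℝ × Circ) := by fun_prop
      have htend : Filter.Tendsto (fun ε : ℝ => ((q.1 - s * ε, q.2) : ℝ × Circ))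
          (nhdsWithin 0 (Ioi 0)) (nhds q) := by
        have := hf.tendsto 0
        simpa using this.mono_left nhdsWithin_le_nhds
      have hmem : ∀ᶠ ε in nhdsWithin (0:ℝ) (Ioi 0),
          ((q.1 - s * ε, q.2) : ℝ × Circ) ∈ {q : ℝ × Circ | h q.2 ≤ s * q.1 + a} :=
        htend (Filter.mem_of_superset (isOpen_interior.mem_nhds hq) interior_subset)
      have hpos : ∀ᶠ ε in nhdsWithin (0:ℝ) (Ioi 0), (0:ℝ) < ε :=
        eventually_mem_nhdsWithin
      obtain ⟨ε, h1, h2⟩ := (hmem.and hpos).exists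
      simp only [mem_setOf_eq] at h1
      have : s * (q.1 - s * ε) = s * q.1 - ε := by
        rw [mul_sub, ← mul_assoc, hs2, one_mul]
      rw [this] at h1
      linarith
    · apply subset_interior_iff.mpr
      refine ⟨{q : ℝ × Circ | h q.2 < s * q.1 + a}, ?_, subset_rfl, ?_⟩
      · exact isOpen_lt (f := fun q : ℝ × Circ => h q.2) (g := fun q : ℝ × Circ => s * q.1 + a)
          (by fun_prop) (by fun_prop)
      · exact Set.setOf_subset_setOf.mpr fun q hq => le_of_lt hq
  rw [frontier, hclosed.closure_eq, hint]
  ext q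
  simp only [mem_diff, mem_setOf_eq, not_lt]
  constructor
  · exact fun ⟨h1, h2⟩ => le_antisymm h1 h2
  · exact fun h => ⟨le_of_eq h, ge_of_eq h⟩


/-- **Refocusing of boundary null geodesics at the antipodal point.**
On the Lorentzian cylinder `C = ℝ × AddCircle (2π)`, for every point `r = (t, θ)`
the past null cone of `r` coincides with the future null cone of the antipodally
shifted point `c = (t - π, θ + π)`:
`frontier Ĵ⁺((t - π, θ + π)) = frontier Ĵ⁻((t, θ))`. -/
theorem cylinder_antipodal_refocusing (r : ℝ × Circ) :
    frontier (Jp (r.1 - Real.pi, r.2 + ((Real.pi : ℝ) : Circ))) = frontier (Jm r) := by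
  obtain ⟨t, θ⟩ := r
  have hJp : Jp (t - Real.pi, θ + ((Real.pi : ℝ) : Circ))
      = {q : ℝ × Circ | ‖q.2 - (θ + ((Real.pi : ℝ) : Circ))‖ ≤ 1 * q.1 + (Real.pi - t)} := by
    ext q; simp only [Jp, caus, mem_setOf_eq]; constructor <;> intro hq <;> linarith
  have hJm : Jm (t, θ) = {q : ℝ × Circ | ‖θ - q.2‖ ≤ (-1) * q.1 + t} := by
    ext q; simp only [Jm, caus, mem_setOf_eq]; constructor <;> intro hq <;> linarith
  rw [hJp, hJm,
    frontier_cone (fun z => ‖z - (θ + ((Real.pi : ℝ) : Circ))‖) (by fun_prop) 1 (Real.pi - t)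
      (Or.inl rfl),
    frontier_cone (fun z => ‖θ - z‖) (by fun_prop) (-1) t (Or.inr rfl)]
  ext q
  simp only [mem_setOf_eq]
  have key : ‖q.2 - (θ + ((Real.pi : ℝ) : Circ))‖ = Real.pi - ‖q.2 - θ‖ := by
    have : q.2 - (θ + ((Real.pi : ℝ) : Circ)) = (q.2 - θ) + ((-Real.pi : ℝ) : Circ) := by
      rw [AddCircle.coe_neg]; abel
    rw [this]
    have hnegpi : ((-Real.pi : ℝ) : Circ) = ((Real.pi : ℝ) : Circ) := by
      calc ((-Real.pi : ℝ) : Circ) = ((-Real.pi + 2 * Real.pi : ℝ) : Circ) :=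
            (AddCircle.coe_add_period (2 * Real.pi) (-Real.pi)).symm
        _ = ((Real.pi : ℝ) : Circ) := by congr 1; ring
    rw [hnegpi, circ_norm_add_pi]
  rw [key, norm_sub_rev θ q.2]
  constructor <;> intro hq <;> linarith
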